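/- Let r ≥ 3, k ≥ 2, t = ⌈(r-2)k/(r-1)⌉, and λ ∈ [r-1] with k + λ ≡ 0 (mod r-1). Suppose V₁, ..., V_r are k-subsets of [n] forming an r-focal hypergraph with focus V_r, and suppose |V_r ∩ V_i| ≤ t for all i ∈ [r-1]. Then there exist at least λ distinct indices i ∈ [r-1] with |V_r \ V_i| = k − t (equivalently |V_r ∩ V_i| = t). -/
import Mathlib


open Finset

private lemma arith_key (m t k lam c sN : ℕ) (hm : 2 ≤ m)
    (h1 : m * t + sN = (m - 1) * k + (m - 1)) (h2 : sN < m)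
    (h3 : m * c = k + lam) (h4 : 1 ≤ lam) (h5 : lam ≤ m) :
    lam + k ≤ m * (k - t) + m := by
  have hmk : (m - 1) * k + k = m * k := by
    have hm1 : m - 1 + 1 = m := by omega
    calc (m - 1) * k + k = (m - 1 + 1) * k := by ring
    _ = m * k := by rw [hm1]
  have htk : t ≤ k := by
    by_contra h
    push_neg at h
    have h6 : m * (k + 1) ≤ m * t := Nat.mul_le_mul_left m (by omega)
    have h7 : m * (k + 1) = m * k + m := by ring
    omega
  have hsplit : m * (k - t) + m * t = m * k := by
    have hkt : k - t + t = k := by omega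
    calc m * (k - t) + m * t = m * (k - t + t) := by ring
    _ = m * k := by rw [hkt]
  have hc : c ≤ k - t + 1 := by
    by_contra h
    push_neg at h
    have h6 : m * (k - t + 2) ≤ m * c := Nat.mul_le_mul_left m (by omega)
    have h7 : m * (k - t + 2) = m * (k - t) + 2 * m := by ring
    omega
  have h8 : m * c ≤ m * (k - t + 1) := Nat.mul_le_mul_left m hc
  have h9 : m * (k - t + 1) = m * (k - t) + m := by ring
  omega

/-- In an r-focal hypergraph of k-sets with focus V_r where all intersections with
the focus have size at most t, at least λ of them have size exactly t. -/
theorem many_tight_intersections {n k r t lam : ℕ} (hr : 3 ≤ r) (hk : 2 ≤ k)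
    (ht : t = ((r - 2) * k + r - 2) / (r - 1))
    (hlam1 : 1 ≤ lam) (hlam2 : lam ≤ r - 1) (hlam : (k + lam) % (r - 1) = 0)
    (Vr : Finset (Fin n)) (V : Fin (r - 1) → Finset (Fin n))
    (hcardr : Vr.card = k) (hcard : ∀ i, (V i).card = k)
    (hinj : Function.Injective V) (hneA : ∀ i, V i ≠ Vr)
    (hfocal : ∀ x ∈ Vr,
      r - 2 ≤ (Finset.univ.filter fun i : Fin (r - 1) => x ∈ V i).card)
    (hint : ∀ i, (Vr ∩ V i).card ≤ t) :
    lam ≤ (Finset.univ.filter fun i : Fin (r - 1) => (Vr \ V i).card = k - t).card := by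
  -- basic facts about the difference sizes
  have hsub : ∀ i, (Vr ∩ V i).card + (Vr \ V i).card = k := by
    intro i
    rw [Finset.card_inter_add_card_sdiff, hcardr]
  have hd_lb : ∀ i, k - t ≤ (Vr \ V i).card := by
    intro i
    have h1 := hsub i
    have h2 := hint i
    omega
  have hd_pos : ∀ i, 1 ≤ (Vr \ V i).card := by
    intro i
    rcases Nat.eq_zero_or_pos (Vr \ V i).card with h | h
    · exfalso
      rw [Finset.card_eq_zero, Finset.sdiff_eq_empty_iff_subset] at h
      exact hneA i (Finset.eq_of_subset_of_card_le h
        (le_of_eq (by rw [hcard, hcardr]))).symm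
    · exact h
  -- pairwise disjointness of the differences
  have hdisj : ∀ i j : Fin (r - 1), i ≠ j → Disjoint (Vr \ V i) (Vr \ V j) := by
    intro i j hij
    rw [Finset.disjoint_left]
    intro x hxi hxj
    have hx : x ∈ Vr := (Finset.mem_sdiff.mp hxi).1
    have hni : x ∉ V i := (Finset.mem_sdiff.mp hxi).2
    have hnj : x ∉ V j := (Finset.mem_sdiff.mp hxj).2
    have h1 := hfocal x hx
    have h2 : (Finset.univ.filter fun i : Fin (r - 1) => x ∈ V i) ⊆
        Finset.univ \ {i, j} := by
      intro l hl
      simp only [Finset.mem_filter] at hl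
      simp only [Finset.mem_sdiff, Finset.mem_univ, true_and, Finset.mem_insert,
        Finset.mem_singleton]
      rintro (rfl | rfl)
      · exact hni hl.2
      · exact hnj hl.2
    have h3 := Finset.card_le_card h2
    have h4 : (Finset.univ \ ({i, j} : Finset (Fin (r - 1)))).card = r - 1 - 2 := by
      rw [Finset.card_sdiff_of_subset (by simp)]
      rw [Finset.card_insert_of_notMem (by simp [hij]), Finset.card_singleton]
      simp [Finset.card_univ]
    omega
  -- the sum of the difference sizes is at most k
  have hsum : ∑ i : Fin (r - 1), (Vr \ V i).card ≤ k := by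
    have hb := Finset.card_biUnion
      (s := (Finset.univ : Finset (Fin (r - 1)))) (t := fun i => Vr \ V i)
      (fun i _ j _ hij => hdisj i j hij)
    rw [← hb, ← hcardr]
    exact Finset.card_le_card (Finset.biUnion_subset.mpr fun i _ => Finset.sdiff_subset)
  -- lower bound on the sum in terms of the number of tight indices
  set S := Finset.univ.filter (fun i : Fin (r - 1) => (Vr \ V i).card = k - t) with hS
  set Sc := Finset.univ.filter (fun i : Fin (r - 1) => ¬ (Vr \ V i).card = k - t)
    with hSc
  have hScard : S.card ≤ r - 1 := by
    have := Finset.card_le_card (Finset.subset_univ S)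
    simpa [Finset.card_univ] using this
  have hsum_split : ∑ i ∈ S, (Vr \ V i).card + ∑ i ∈ Sc, (Vr \ V i).card
      = ∑ i : Fin (r - 1), (Vr \ V i).card := by
    rw [hS, hSc]
    exact Finset.sum_filter_add_sum_filter_not _ _ _
  have hcard_split : S.card + Sc.card = r - 1 := by
    rw [hS, hSc, Finset.card_filter_add_card_filter_not]
    simp [Finset.card_univ]
  have hlb1 : S.card * (k - t) ≤ ∑ i ∈ S, (Vr \ V i).card := by
    have := Finset.card_nsmul_le_sum S (fun i => (Vr \ V i).card) (k - t)
      (fun i _ => hd_lb i)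
    simpa using this
  have hlb2 : Sc.card * (k - t + 1) ≤ ∑ i ∈ Sc, (Vr \ V i).card := by
    have := Finset.card_nsmul_le_sum Sc (fun i => (Vr \ V i).card) (k - t + 1)
      (fun i hi => by
        have h1 := hd_lb i
        have h2 : ¬ (Vr \ V i).card = k - t := by
          rw [hSc] at hi
          exact (Finset.mem_filter.mp hi).2
        show k - t + 1 ≤ (Vr \ V i).card
        omega)
    simpa using this
  -- combine into: (r-1) * (k - t) + (r-1) ≤ k + S.card
  have hmul1 : S.card * (k - t) + Sc.card * (k - t + 1) =
      (S.card + Sc.card) * (k - t) + Sc.card := by ring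
  have hmul2 : (S.card + Sc.card) * (k - t) = (r - 1) * (k - t) := by
    rw [hcard_split]
  have hmain : (r - 1) * (k - t) + (r - 1) ≤ k + S.card := by omega
  -- the arithmetic of t and lam
  have hdiv : (r - 1) * t + ((r - 2) * k + r - 2) % (r - 1)
      = (r - 1 - 1) * k + (r - 1 - 1) := by
    have h1 : r - 2 = r - 1 - 1 := by omega
    have h2 := Nat.div_add_mod ((r - 2) * k + r - 2) (r - 1)
    rw [← ht] at h2
    rw [← h1]
    omega
  have hmod : ((r - 2) * k + r - 2) % (r - 1) < r - 1 := Nat.mod_lt _ (by omega)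
  obtain ⟨c, hc⟩ : (r - 1) ∣ (k + lam) := Nat.dvd_of_mod_eq_zero hlam
  have harith := arith_key (r - 1) t k lam c (((r - 2) * k + r - 2) % (r - 1))
    (by omega) hdiv hmod (by rw [← hc]) hlam1 hlam2
  omega
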